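/- Let f : ℝⁿ → ℝ be differentiable with ∇f Lipschitz continuous on ℝⁿ with constant L(f) for the Euclidean norm, and strongly convex on ℝⁿ with constant of strong convexity α > 0 with respect to the Euclidean norm. Let A be a q × n real matrix whose rows are linearly independent, and b ∈ ℝ^q. Then the dual function θ(λ) = inf_{x ∈ ℝⁿ} [ f(x) + λᵀ(Ax − b) ] is finite-valued, differentiable and strongly concave on ℝ^q with constant of strong concavity α·λ_min(AAᵀ)/L(f)² with respect to the Euclidean norm. -/

import Mathlib

open scoped Matrix


set_option maxHeartbeats 1000000

open scoped RealInnerProductSpace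

section AuxLemmas

lemma aux_mulVec_symm {q : ℕ} (M : Matrix (Fin q) (Fin q) ℝ) (hM : M.IsHermitian)
    (x y : EuclideanSpace ℝ (Fin q)) :
    ⟪x, ((WithLp.equiv 2 _).symm (M *ᵥ y) : EuclideanSpace ℝ (Fin q))⟫
      = ⟪((WithLp.equiv 2 _).symm (M *ᵥ x) : EuclideanSpace ℝ (Fin q)), y⟫ := by
  simp only [PiLp.inner_apply, RCLike.inner_apply, starRingEnd_apply, star_trivial]
  have : (x : Fin q → ℝ) ⬝ᵥ (M *ᵥ y) = (M *ᵥ x) ⬝ᵥ y := by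
    rw [Matrix.dotProduct_mulVec, ← Matrix.vecMul_transpose]
    rw [show Mᵀ = M from by simpa [Matrix.IsHermitian] using hM]
  simpa [dotProduct, mul_comm] using this

noncomputable def lambdaMinAux {q : ℕ} (M : Matrix (Fin q) (Fin q) ℝ)
    (hM : M.IsHermitian) : ℝ := ⨅ i, hM.eigenvalues i

lemma aux_rayleigh_lower {q : ℕ} (M : Matrix (Fin q) (Fin q) ℝ) (hM : M.IsHermitian)
    (x : EuclideanSpace ℝ (Fin q)) :
    lambdaMinAux M hM * ‖x‖ ^ 2
      ≤ ⟪x, ((WithLp.equiv 2 _).symm (M *ᵥ x) : EuclideanSpace ℝ (Fin q))⟫ := by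
  rcases Nat.eq_zero_or_pos q with hq | hq
  · subst hq
    have hx : x = 0 := Subsingleton.elim _ _
    simp [hx, lambdaMinAux, Real.iInf_of_isEmpty]
  · have hne : Nonempty (Fin q) := ⟨⟨0, hq⟩⟩
    set b := hM.eigenvectorBasis with hb
    have hMx : ⟪x, ((WithLp.equiv 2 _).symm (M *ᵥ x) : EuclideanSpace ℝ (Fin q))⟫
        = ∑ i, hM.eigenvalues i * (⟪b i, x⟫ * ⟪b i, x⟫) := by
      have h1 := b.sum_inner_mul_inner x ((WithLp.equiv 2 _).symm (M *ᵥ x))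
      rw [← h1]
      refine Finset.sum_congr rfl fun i _ => ?_
      have h2 : ⟪b i, ((WithLp.equiv 2 _).symm (M *ᵥ x) : EuclideanSpace ℝ (Fin q))⟫
          = hM.eigenvalues i * ⟪b i, x⟫ := by
        rw [aux_mulVec_symm M hM]
        have h3 : ((WithLp.equiv 2 _).symm (M *ᵥ (b i)) : EuclideanSpace ℝ (Fin q))
            = hM.eigenvalues i • b i := by
          have := hM.mulVec_eigenvectorBasis i
          apply (WithLp.equiv 2 _).injective
          simpa using this
        rw [h3, real_inner_smul_left]
      rw [h2, real_inner_comm x (b i)]; ring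
    have hnorm : ∑ i, ⟪b i, x⟫ * ⟪b i, x⟫ = ‖x‖ ^ 2 := by
      have := b.sum_inner_mul_inner x x
      rw [real_inner_self_eq_norm_sq] at this
      rw [← this]
      exact Finset.sum_congr rfl fun i _ => by rw [real_inner_comm x (b i)]
    rw [hMx, ← hnorm, Finset.mul_sum]
    refine Finset.sum_le_sum fun i _ => ?_
    have h4 : lambdaMinAux M hM ≤ hM.eigenvalues i :=
      ciInf_le (Set.Finite.bddBelow (Set.finite_range _)) i
    exact mul_le_mul_of_nonneg_right h4 (mul_self_nonneg _)

lemma aux_grad_lb {n : ℕ} {f : EuclideanSpace ℝ (Fin n) → ℝ}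
    {f' : EuclideanSpace ℝ (Fin n) → EuclideanSpace ℝ (Fin n)}
    (hdiff : ∀ x, HasGradientAt f (f' x) x) {α : ℝ}
    (hsc : ∀ x y : EuclideanSpace ℝ (Fin n), ∀ t : ℝ, 0 ≤ t → t ≤ 1 →
      f (t • x + (1 - t) • y)
        ≤ t * f x + (1 - t) * f y - α * (t * (1 - t)) / 2 * ‖y - x‖ ^ 2)
    (x y : EuclideanSpace ℝ (Fin n)) :
    f y + ⟪f' y, x - y⟫ + α / 2 * ‖x - y‖ ^ 2 ≤ f x := by
  set v := x - y with hv
  have hφ : HasDerivAt (fun t : ℝ => f (y + t • v)) ⟪f' y, v⟫ 0 := by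
    have h1 := (hdiff y).hasFDerivAt
    have h1' : HasFDerivAt f ((InnerProductSpace.toDual ℝ _) (f' y)) ((0:ℝ) • v + y) := by
      simpa using h1
    have h2 := h1'.comp_hasDerivAt (f := fun s : ℝ => s • v + y) (0:ℝ)
      (by simpa using ((hasDerivAt_id (0:ℝ)).smul_const v).add_const y)
    simpa [Function.comp_def, add_comm] using h2
  have hslope : Filter.Tendsto (fun t : ℝ => (f (y + t • v) - f y) / t)
      (nhdsWithin 0 (Set.Ioi 0)) (nhds ⟪f' y, v⟫) := by
    have := hφ.tendsto_slope_zero_right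
    simpa [div_eq_inv_mul] using this
  have hlim2 : Filter.Tendsto (fun t : ℝ => f x - f y - α * (1 - t) / 2 * ‖v‖ ^ 2)
      (nhdsWithin 0 (Set.Ioi 0)) (nhds (f x - f y - α / 2 * ‖v‖ ^ 2)) := by
    have : Filter.Tendsto (fun t : ℝ => f x - f y - α * (1 - t) / 2 * ‖v‖ ^ 2)
        (nhds 0) (nhds (f x - f y - α * (1 - (0:ℝ)) / 2 * ‖v‖ ^ 2)) := by
      apply Filter.Tendsto.const_sub
      apply Filter.Tendsto.mul_const
      apply Filter.Tendsto.div_const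
      exact (Filter.Tendsto.const_sub _ Filter.tendsto_id).const_mul _
    simpa using this.mono_left nhdsWithin_le_nhds
  have hle : ⟪f' y, v⟫ ≤ f x - f y - α / 2 * ‖v‖ ^ 2 := by
    refine le_of_tendsto_of_tendsto hslope hlim2 ?_
    filter_upwards [Ioo_mem_nhdsGT_of_mem (Set.left_mem_Ico.2 one_pos)] with t ht
    have ht0 : 0 < t := ht.1
    have ht1 : t ≤ 1 := le_of_lt ht.2
    have hkey := hsc x y t (le_of_lt ht0) ht1
    have hpt : t • x + (1 - t) • y = y + t • v := by
      rw [hv]; module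
    rw [hpt] at hkey
    have hnorm : ‖y - x‖ = ‖v‖ := by rw [hv, norm_sub_rev]
    rw [hnorm] at hkey
    rw [div_le_iff₀ ht0]
    nlinarith [hkey]
  nlinarith [hle]

lemma aux_descent {n : ℕ} {f : EuclideanSpace ℝ (Fin n) → ℝ}
    {f' : EuclideanSpace ℝ (Fin n) → EuclideanSpace ℝ (Fin n)}
    (hdiff : ∀ x, HasGradientAt f (f' x) x) {L : ℝ}
    (hLip : ∀ x y, ‖f' y - f' x‖ ≤ L * ‖y - x‖)
    (x y : EuclideanSpace ℝ (Fin n)) :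
    f x ≤ f y + ⟪f' y, x - y⟫ + L / 2 * ‖x - y‖ ^ 2 := by
  set v := x - y with hv
  have hcont : Continuous f' := by
    refine LipschitzWith.continuous (K := L.toNNReal) ?_
    refine LipschitzWith.of_dist_le_mul fun a b => ?_
    rw [dist_eq_norm, dist_eq_norm]
    calc ‖f' a - f' b‖ ≤ L * ‖a - b‖ := hLip b a
    _ ≤ L.toNNReal * ‖a - b‖ :=
        mul_le_mul_of_nonneg_right (Real.le_coe_toNNReal L) (norm_nonneg _)
  have hderiv : ∀ t : ℝ, HasDerivAt (fun s : ℝ => f (y + s • v))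
      ⟪f' (y + t • v), v⟫ t := by
    intro t
    have h1 := (hdiff (y + t • v)).hasFDerivAt
    have h1' : HasFDerivAt f ((InnerProductSpace.toDual ℝ _) (f' (y + t • v))) (t • v + y) := by
      simpa [add_comm] using h1
    have h2 := h1'.comp_hasDerivAt (f := fun s : ℝ => s • v + y) t
      (by simpa using ((hasDerivAt_id t).smul_const v).add_const y)
    simpa [Function.comp_def, add_comm] using h2
  have hcont2 : Continuous fun t : ℝ => ⟪f' (y + t • v), v⟫ := by
    apply Continuous.inner
    · exact hcont.comp (by continuity)
    · exact continuous_const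
  have hint : ∫ t in (0:ℝ)..1, ⟪f' (y + t • v), v⟫ = f x - f y := by
    have := intervalIntegral.integral_eq_sub_of_hasDerivAt
      (f := fun s : ℝ => f (y + s • v)) (a := (0:ℝ)) (b := 1)
      (fun t _ => hderiv t) (hcont2.intervalIntegrable 0 1)
    simpa [hv] using this
  have hmono : ∫ t in (0:ℝ)..1, ⟪f' (y + t • v), v⟫
      ≤ ∫ t in (0:ℝ)..1, (⟪f' y, v⟫ + L * t * ‖v‖ ^ 2) := by
    apply intervalIntegral.integral_mono_on zero_le_one
      (hcont2.intervalIntegrable 0 1)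
      ((by continuity : Continuous fun t : ℝ => ⟪f' y, v⟫ + L * t * ‖v‖ ^ 2).intervalIntegrable 0 1)
    intro t ht
    have h3 : ⟪f' (y + t • v), v⟫ - ⟪f' y, v⟫ = ⟪f' (y + t • v) - f' y, v⟫ := by
      rw [inner_sub_left]
    have h4 : ⟪f' (y + t • v) - f' y, v⟫ ≤ ‖f' (y + t • v) - f' y‖ * ‖v‖ :=
      real_inner_le_norm _ _
    have h5 : ‖f' (y + t • v) - f' y‖ ≤ L * ‖t • v‖ := by
      simpa using hLip y (y + t • v)
    have h6 : ‖t • v‖ = t * ‖v‖ := by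
      rw [norm_smul, Real.norm_eq_abs, abs_of_nonneg ht.1]
    have h7 : ‖f' (y + t • v) - f' y‖ * ‖v‖ ≤ (L * (t * ‖v‖)) * ‖v‖ :=
      mul_le_mul_of_nonneg_right (by rw [← h6]; exact h5) (norm_nonneg v)
    calc ⟪f' (y + t • v), v⟫ = ⟪f' y, v⟫ + ⟪f' (y + t • v) - f' y, v⟫ := by
          rw [← h3]; ring
    _ ≤ ⟪f' y, v⟫ + ‖f' (y + t • v) - f' y‖ * ‖v‖ := by linarith
    _ ≤ ⟪f' y, v⟫ + (L * (t * ‖v‖)) * ‖v‖ := by linarith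
    _ = ⟪f' y, v⟫ + L * t * ‖v‖ ^ 2 := by ring
  have hrhs : ∫ t in (0:ℝ)..1, (⟪f' y, v⟫ + L * t * ‖v‖ ^ 2)
      = ⟪f' y, v⟫ + L / 2 * ‖v‖ ^ 2 := by
    have hc3 : Continuous fun t : ℝ => L * t * ‖v‖ ^ 2 := by
      exact (continuous_const.mul continuous_id).mul continuous_const
    rw [intervalIntegral.integral_add (intervalIntegrable_const) (hc3.intervalIntegrable 0 1)]
    rw [intervalIntegral.integral_const]
    have : ∫ t in (0:ℝ)..1, L * t * ‖v‖ ^ 2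
        = (L * ‖v‖ ^ 2) * ∫ t in (0:ℝ)..1, t := by
      rw [← intervalIntegral.integral_const_mul]
      congr 1; funext t; ring
    rw [this, integral_id]
    ring_nf
  rw [hint] at hmono
  rw [hrhs] at hmono
  linarith

lemma aux_exists_global_min {n : ℕ} {g : EuclideanSpace ℝ (Fin n) → ℝ}
    (hg : Continuous g) {d : EuclideanSpace ℝ (Fin n)} {α : ℝ} (hα : 0 < α)
    (hlb : ∀ x, g 0 + ⟪d, x⟫ + α / 2 * ‖x‖ ^ 2 ≤ g x) :
    ∃ z, ∀ x, g z ≤ g x := by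
  set R : ℝ := 2 * ‖d‖ / α + 1 with hR
  have hR0 : 0 < R := by positivity
  obtain ⟨z, hzS, hz⟩ := (isCompact_closedBall (0 : EuclideanSpace ℝ (Fin n)) R).exists_isMinOn
    ⟨0, by simp [le_of_lt hR0]⟩ hg.continuousOn
  refine ⟨z, fun x => ?_⟩
  by_cases hx : x ∈ Metric.closedBall (0 : EuclideanSpace ℝ (Fin n)) R
  · exact hz hx
  · have hxn : R < ‖x‖ := by
      simpa [Metric.mem_closedBall, dist_zero_right] using hx
    have h0 : g z ≤ g 0 := hz (by simp [le_of_lt hR0])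
    have h1 : g 0 + ⟪d, x⟫ + α / 2 * ‖x‖ ^ 2 ≤ g x := hlb x
    have h2 : -(‖d‖ * ‖x‖) ≤ ⟪d, x⟫ := neg_le_of_neg_le (by
      have := real_inner_le_norm d (-x)
      simpa [inner_neg_right] using this)
    have h3 : ‖d‖ ≤ α / 2 * R := by
      have he : α / 2 * R = ‖d‖ + α / 2 := by
        rw [hR]; field_simp
      linarith
    have h4 : ‖d‖ * ‖x‖ ≤ α / 2 * R * ‖x‖ :=
      mul_le_mul_of_nonneg_right h3 (norm_nonneg x)
    have hx0 : 0 < ‖x‖ := lt_trans hR0 hxn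
    have h5 : α / 2 * R * ‖x‖ < α / 2 * ‖x‖ * ‖x‖ := by
      nlinarith [mul_pos (mul_pos (half_pos hα) hx0) (sub_pos.2 hxn)]
    have hsq : ‖x‖ ^ 2 = ‖x‖ * ‖x‖ := sq ‖x‖
    linarith [h1, h2]

lemma aux_sum_eq_inner {n q : ℕ} (A : Matrix (Fin q) (Fin n) ℝ)
    (b lam : EuclideanSpace ℝ (Fin q)) (x : EuclideanSpace ℝ (Fin n)) :
    ∑ i, lam i * (A.mulVec x i - b i)
      = ⟪((WithLp.equiv 2 _).symm (Aᵀ *ᵥ (WithLp.equiv 2 _ lam)) : EuclideanSpace ℝ (Fin n)), x⟫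
        - ∑ i, lam i * b i := by
  simp only [PiLp.inner_apply, RCLike.inner_apply, starRingEnd_apply, star_trivial,
    WithLp.equiv_symm_apply, PiLp.toLp_apply]
  rw [eq_sub_iff_add_eq, ← Finset.sum_add_distrib]
  have h1 : ∀ i, lam i * (A.mulVec x i - b i) + lam i * b i
      = ∑ j, lam i * (A i j * x j) := by
    intro i
    have : lam i * (A.mulVec x i - b i) + lam i * b i = lam i * A.mulVec x i := by ring
    rw [this, Matrix.mulVec, dotProduct, Finset.mul_sum]
  rw [Finset.sum_congr rfl fun i _ => h1 i, Finset.sum_comm]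
  refine Finset.sum_congr rfl fun j _ => ?_
  rw [Matrix.mulVec, dotProduct, Finset.mul_sum]
  exact Finset.sum_congr rfl fun i _ => by
    rw [Matrix.transpose_apply]; simp only [WithLp.equiv_apply]; ring

lemma aux_adjoint {n q : ℕ} (A : Matrix (Fin q) (Fin n) ℝ)
    (x : EuclideanSpace ℝ (Fin n)) (w : EuclideanSpace ℝ (Fin q)) :
    ⟪((WithLp.equiv 2 _).symm (A *ᵥ (WithLp.equiv 2 _ x)) : EuclideanSpace ℝ (Fin q)), w⟫
      = ⟪((WithLp.equiv 2 _).symm (Aᵀ *ᵥ (WithLp.equiv 2 _ w)) : EuclideanSpace ℝ (Fin n)), x⟫ := by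
  simp only [PiLp.inner_apply, RCLike.inner_apply, starRingEnd_apply, star_trivial,
    WithLp.equiv_symm_apply, PiLp.toLp_apply, WithLp.equiv_apply]
  have h1 : ∀ i, (A *ᵥ (WithLp.equiv 2 _ x)) i * w i = ∑ j, A i j * x j * w i := by
    intro i; rw [Matrix.mulVec, dotProduct, Finset.sum_mul]
    exact Finset.sum_congr rfl fun j _ => by simp only [WithLp.equiv_apply]
  have h2 : ∀ j, (Aᵀ *ᵥ (WithLp.equiv 2 _ w)) j * x j = ∑ i, A i j * x j * w i := by
    intro j; rw [Matrix.mulVec, dotProduct, Finset.sum_mul]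
    exact Finset.sum_congr rfl fun i _ => by
      rw [Matrix.transpose_apply]; simp only [WithLp.equiv_apply]; ring
  simp only [WithLp.equiv_apply] at h1 h2
  rw [Finset.sum_congr rfl fun i _ => (mul_comm _ _).trans (h1 i),
    Finset.sum_congr rfl fun j _ => (mul_comm _ _).trans (h2 j),
    Finset.sum_comm]

lemma aux_AAt {n q : ℕ} (A : Matrix (Fin q) (Fin n) ℝ) (w : EuclideanSpace ℝ (Fin q)) :
    ⟪w, ((WithLp.equiv 2 _).symm ((A * Aᵀ) *ᵥ w) : EuclideanSpace ℝ (Fin q))⟫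
      = ‖((WithLp.equiv 2 _).symm (Aᵀ *ᵥ (WithLp.equiv 2 _ w)) : EuclideanSpace ℝ (Fin n))‖ ^ 2 := by
  rw [← real_inner_self_eq_norm_sq]
  simp only [PiLp.inner_apply, RCLike.inner_apply, starRingEnd_apply, star_trivial,
    WithLp.equiv_symm_apply, PiLp.toLp_apply, WithLp.equiv_apply]
  have key : (w : Fin q → ℝ) ⬝ᵥ ((A * Aᵀ) *ᵥ w) = (Aᵀ *ᵥ w) ⬝ᵥ (Aᵀ *ᵥ w) := by
    rw [← Matrix.mulVec_mulVec, Matrix.dotProduct_mulVec]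
    congr 1
    rw [← Matrix.transpose_transpose A, Matrix.vecMul_transpose, Matrix.transpose_transpose]
  simpa [dotProduct, mul_comm] using key

end AuxLemmas

/-- The smallest eigenvalue of a Hermitian real matrix. -/
noncomputable def lambdaMin {q : ℕ} (M : Matrix (Fin q) (Fin q) ℝ)
    (hM : M.IsHermitian) : ℝ := ⨅ i, hM.eigenvalues i

/-- If `f` is differentiable with `L`-Lipschitz gradient and strongly
convex with constant `α > 0`, and the rows of `A` are linearly independent, then
the dual function `θ` is finite-valued, differentiable, and strongly concave on
`ℝ^q` with constant `α·λ_min(AAᵀ)/L²` for the Euclidean norm. -/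
theorem dual_function_strongly_concave_of_strongly_convex
    {n q : ℕ} (f : EuclideanSpace ℝ (Fin n) → ℝ)
    (f' : EuclideanSpace ℝ (Fin n) → EuclideanSpace ℝ (Fin n))
    (hdiff : ∀ x, HasGradientAt f (f' x) x)
    (L : ℝ) (hL : 0 < L)
    (hLip : ∀ x y, ‖f' y - f' x‖ ≤ L * ‖y - x‖)
    (α : ℝ) (hα : 0 < α)
    (hsc : ∀ x y : EuclideanSpace ℝ (Fin n), ∀ t : ℝ, 0 ≤ t → t ≤ 1 →
      f (t • x + (1 - t) • y)
        ≤ t * f x + (1 - t) * f y - α * (t * (1 - t)) / 2 * ‖y - x‖ ^ 2)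
    (A : Matrix (Fin q) (Fin n) ℝ)
    (hA : LinearIndependent ℝ A)
    (b : EuclideanSpace ℝ (Fin q))
    (θ : EuclideanSpace ℝ (Fin q) → EReal)
    (hθ : θ = fun lam => ⨅ x : EuclideanSpace ℝ (Fin n),
      ((f x + ∑ i, lam i * (A.mulVec x i - b i) : ℝ) : EReal)) :
    (∀ lam, θ lam ≠ ⊥ ∧ θ lam ≠ ⊤) ∧
    (∃ θ' : EuclideanSpace ℝ (Fin q) → EuclideanSpace ℝ (Fin q),
      ∀ lam, HasGradientAt (fun l => (θ l).toReal) (θ' lam) lam) ∧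
    (∀ l1 l2 : EuclideanSpace ℝ (Fin q), ∀ t : ℝ, 0 ≤ t → t ≤ 1 →
      t * (θ l1).toReal + (1 - t) * (θ l2).toReal
        + (α * lambdaMin (A * Aᵀ) (Matrix.isHermitian_mul_conjTranspose_self A) / L ^ 2)
          * (t * (1 - t)) / 2 * ‖l1 - l2‖ ^ 2
        ≤ (θ (t • l1 + (1 - t) • l2)).toReal) := by
  classical
  -- the Lagrangian for fixed multiplier
  set g : EuclideanSpace ℝ (Fin q) → EuclideanSpace ℝ (Fin n) → ℝ :=
    fun lam x => f x + ∑ i, lam i * (A.mulVec x i - b i) with hgdef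
  -- the continuous linear map of Aᵀ and A
  set TA : EuclideanSpace ℝ (Fin q) →L[ℝ] EuclideanSpace ℝ (Fin n) :=
    LinearMap.toContinuousLinearMap (Matrix.toEuclideanLin Aᵀ) with hTAdef
  set SA : EuclideanSpace ℝ (Fin n) →L[ℝ] EuclideanSpace ℝ (Fin q) :=
    LinearMap.toContinuousLinearMap (Matrix.toEuclideanLin A) with hSAdef
  have hTA : ∀ l : EuclideanSpace ℝ (Fin q),
      TA l = ((WithLp.equiv 2 _).symm (Aᵀ *ᵥ (WithLp.equiv 2 _ l)) : EuclideanSpace ℝ (Fin n)) :=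
    fun l => rfl
  -- basic rewriting of g
  have hg_eq : ∀ lam x, g lam x = f x + ⟪TA lam, x⟫ - ∑ i, lam i * b i := by
    intro lam x
    rw [hgdef]
    simp only []
    rw [aux_sum_eq_inner A b lam x, hTA]
    ring
  -- gradient of g
  have hgdiff : ∀ lam x, HasGradientAt (g lam) (f' x + TA lam) x := by
    intro lam x
    rw [hasGradientAt_iff_hasFDerivAt]
    have heq : g lam = fun y => (f y + ⟪TA lam, y⟫) - ∑ i, lam i * b i := by
      funext y; rw [hg_eq lam y]
    rw [heq]
    have h2 : HasFDerivAt (fun y : EuclideanSpace ℝ (Fin n) => ⟪TA lam, y⟫)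
        (InnerProductSpace.toDual ℝ _ (TA lam)) x :=
      (InnerProductSpace.toDual ℝ _ (TA lam)).hasFDerivAt
    have h3 := ((hdiff x).hasFDerivAt.add h2).sub_const (∑ i, lam i * b i)
    have h4 : (InnerProductSpace.toDual ℝ (EuclideanSpace ℝ (Fin n))) (f' x + TA lam)
        = (InnerProductSpace.toDual ℝ _ (f' x)) + (InnerProductSpace.toDual ℝ _ (TA lam)) :=
      map_add _ _ _
    rw [h4]
    exact h3
  -- strong convexity of g
  have hgsc : ∀ lam, ∀ x y : EuclideanSpace ℝ (Fin n), ∀ t : ℝ, 0 ≤ t → t ≤ 1 →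
      g lam (t • x + (1 - t) • y)
        ≤ t * g lam x + (1 - t) * g lam y - α * (t * (1 - t)) / 2 * ‖y - x‖ ^ 2 := by
    intro lam x y t ht0 ht1
    rw [hg_eq, hg_eq, hg_eq]
    have hin : ⟪TA lam, t • x + (1 - t) • y⟫
        = t * ⟪TA lam, x⟫ + (1 - t) * ⟪TA lam, y⟫ := by
      rw [inner_add_right, real_inner_smul_right, real_inner_smul_right]
    have := hsc x y t ht0 ht1
    rw [hin]
    linarith
  -- first-order lower bound for g
  have hglb : ∀ lam x y, g lam y + ⟪f' y + TA lam, x - y⟫ + α / 2 * ‖x - y‖ ^ 2 ≤ g lam x :=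
    fun lam => aux_grad_lb (hgdiff lam) (hgsc lam)
  -- continuity
  have hfcont : Continuous f := by
    rw [continuous_iff_continuousAt]
    exact fun x => (hdiff x).differentiableAt.continuousAt
  have hgcont : ∀ lam, Continuous (g lam) := by
    intro lam
    have heq : g lam = fun y => (f y + ⟪TA lam, y⟫) - ∑ i, lam i * b i := by
      funext y; rw [hg_eq lam y]
    rw [heq]
    exact (hfcont.add (continuous_const.inner continuous_id)).sub continuous_const
  -- existence of a minimizer
  have hmin : ∀ lam, ∃ z, ∀ x, g lam z ≤ g lam x := by
    intro lam
    refine aux_exists_global_min (hgcont lam) (d := f' 0 + TA lam) hα (fun x => ?_)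
    have := hglb lam x 0
    simpa using this
  set z : EuclideanSpace ℝ (Fin q) → EuclideanSpace ℝ (Fin n) :=
    fun lam => (hmin lam).choose with hzdef
  have hz : ∀ lam x, g lam (z lam) ≤ g lam x := fun lam => (hmin lam).choose_spec
  -- value of θ
  have hθval : ∀ lam, θ lam = ((g lam (z lam) : ℝ) : EReal) := by
    intro lam
    rw [hθ]
    have heq : (fun x : EuclideanSpace ℝ (Fin n) =>
        ((f x + ∑ i, lam i * (A.mulVec x i - b i) : ℝ) : EReal))
        = fun x => ((g lam x : ℝ) : EReal) := by
      funext x; rw [hgdef]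
    show (⨅ x : EuclideanSpace ℝ (Fin n),
        ((f x + ∑ i, lam i * (A.mulVec x i - b i) : ℝ) : EReal)) = _
    rw [heq]
    refine le_antisymm (iInf_le _ (z lam)) (le_iInf fun x => ?_)
    exact_mod_cast hz lam x
  have htoReal : ∀ lam, (θ lam).toReal = g lam (z lam) := by
    intro lam; rw [hθval lam]; exact EReal.toReal_coe _
  have hSA : ∀ x : EuclideanSpace ℝ (Fin n),
      SA x = ((WithLp.equiv 2 _).symm (A *ᵥ (WithLp.equiv 2 _ x)) : EuclideanSpace ℝ (Fin q)) :=
    fun x => rfl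
  -- strong monotonicity of the gradient
  have hmonof : ∀ u w : EuclideanSpace ℝ (Fin n),
      α * ‖u - w‖ ^ 2 ≤ ⟪f' u - f' w, u - w⟫ := by
    intro u w
    have h1 := aux_grad_lb hdiff hsc u w
    have h2 := aux_grad_lb hdiff hsc w u
    have hn : ‖w - u‖ = ‖u - w‖ := norm_sub_rev _ _
    have h3 : ⟪f' u, w - u⟫ = -⟪f' u, u - w⟫ := by
      rw [show w - u = -(u - w) by abel, inner_neg_right]
    rw [hn, h3] at h2
    have h4 : ⟪f' u - f' w, u - w⟫ = ⟪f' u, u - w⟫ - ⟪f' w, u - w⟫ :=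
      inner_sub_left _ _ _
    linarith
  -- first-order optimality at the minimizer
  have hfoc : ∀ lam, f' (z lam) = -(TA lam) := by
    intro lam
    have hloc : IsLocalMin (g lam) (z lam) := Filter.Eventually.of_forall (hz lam)
    have h0 := hloc.hasFDerivAt_eq_zero (hgdiff lam (z lam)).hasFDerivAt
    have h1 : f' (z lam) + TA lam = 0 := by
      apply (InnerProductSpace.toDual ℝ (EuclideanSpace ℝ (Fin n))).injective
      rw [h0, map_zero]
    have := eq_neg_of_add_eq_zero_left h1
    exact this
  -- Lipschitz continuity of the minimizer map
  have hzlip : ∀ l m, α * ‖z l - z m‖ ≤ ‖TA‖ * ‖l - m‖ := by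
    intro l m
    have h1 := hmonof (z l) (z m)
    have h2 : f' (z l) - f' (z m) = TA (m - l) := by
      rw [hfoc l, hfoc m, map_sub]; abel
    rw [h2] at h1
    have h3 : ⟪TA (m - l), z l - z m⟫ ≤ ‖TA (m - l)‖ * ‖z l - z m‖ :=
      real_inner_le_norm _ _
    have h4 : ‖TA (m - l)‖ ≤ ‖TA‖ * ‖m - l‖ := TA.le_opNorm _
    have h5 : ‖m - l‖ = ‖l - m‖ := norm_sub_rev _ _
    rcases eq_or_lt_of_le (norm_nonneg (z l - z m)) with hd | hd
    · rw [← hd, mul_zero]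
      positivity
    · have h6 : ‖TA (m - l)‖ * ‖z l - z m‖ ≤ (‖TA‖ * ‖l - m‖) * ‖z l - z m‖ :=
        mul_le_mul_of_nonneg_right (by rw [← h5]; exact h4) (norm_nonneg _)
      have h7 : α * ‖z l - z m‖ * ‖z l - z m‖ ≤ (‖TA‖ * ‖l - m‖) * ‖z l - z m‖ := by
        nlinarith [h1, h3]
      exact le_of_mul_le_mul_right h7 hd
  -- how g varies with the multiplier
  have hshift : ∀ l m (x : EuclideanSpace ℝ (Fin n)),
      g m x = g l x + ⟪SA x - b, m - l⟫ := by
    intro l m x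
    rw [hg_eq l x, hg_eq m x]
    have hb : ⟪b, m - l⟫ = (∑ i, m i * b i) - ∑ i, l i * b i := by
      simp only [PiLp.inner_apply, RCLike.inner_apply, starRingEnd_apply, star_trivial]
      rw [← Finset.sum_sub_distrib]
      refine Finset.sum_congr rfl fun i _ => ?_
      have : (m - l) i = m i - l i := rfl
      rw [this]; ring
    have hAx : ⟪SA x, m - l⟫ = ⟪TA m, x⟫ - ⟪TA l, x⟫ := by
      rw [hSA, aux_adjoint A x (m - l)]
      have : ((WithLp.equiv 2 _).symm (Aᵀ *ᵥ (WithLp.equiv 2 _ (m - l)))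
          : EuclideanSpace ℝ (Fin n)) = TA (m - l) := (hTA (m - l)).symm
      rw [this, map_sub, inner_sub_left]
    have hsb : ⟪SA x - b, m - l⟫ = ⟪SA x, m - l⟫ - ⟪b, m - l⟫ := inner_sub_left _ _ _
    rw [hsb, hAx, hb]
    ring
  -- the candidate gradient of θ and the two-sided estimate
  have hC0 : (0:ℝ) ≤ ‖SA‖ * ‖TA‖ / α := by positivity
  have hkey : ∀ lam mu, |g mu (z mu) - g lam (z lam) - ⟪SA (z lam) - b, mu - lam⟫|
      ≤ (‖SA‖ * ‖TA‖ / α) * ‖mu - lam‖ ^ 2 := by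
    intro lam mu
    have hub : g mu (z mu) - g lam (z lam) - ⟪SA (z lam) - b, mu - lam⟫ ≤ 0 := by
      have h1 : g mu (z mu) ≤ g mu (z lam) := hz mu (z lam)
      have h2 := hshift lam mu (z lam)
      linarith
    have hlb2 : -((‖SA‖ * ‖TA‖ / α) * ‖mu - lam‖ ^ 2)
        ≤ g mu (z mu) - g lam (z lam) - ⟪SA (z lam) - b, mu - lam⟫ := by
      have h1 : g lam (z lam) ≤ g lam (z mu) := hz lam (z mu)
      have h2 := hshift lam mu (z mu)
      have h3 : ⟪SA (z mu) - b, mu - lam⟫ - ⟪SA (z lam) - b, mu - lam⟫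
          = ⟪SA (z mu - z lam), mu - lam⟫ := by
        rw [← inner_sub_left]
        congr 1
        rw [map_sub]
        abel
      have h4 : -(‖SA (z mu - z lam)‖ * ‖mu - lam‖) ≤ ⟪SA (z mu - z lam), mu - lam⟫ := by
        have := real_inner_le_norm (SA (z mu - z lam)) (-(mu - lam))
        rw [inner_neg_right, norm_neg] at this
        linarith
      have h5 : ‖SA (z mu - z lam)‖ ≤ ‖SA‖ * ‖z mu - z lam‖ := SA.le_opNorm _
      have h6 : α * ‖z mu - z lam‖ ≤ ‖TA‖ * ‖mu - lam‖ := hzlip mu lam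
      have e1 : g mu (z mu) - g lam (z lam) - ⟪SA (z lam) - b, mu - lam⟫
          = (g lam (z mu) - g lam (z lam)) + ⟪SA (z mu - z lam), mu - lam⟫ := by
        linear_combination h2 + h3
      have h7 : ‖SA (z mu - z lam)‖ * ‖mu - lam‖
          ≤ (‖SA‖ * ‖TA‖ / α) * ‖mu - lam‖ ^ 2 := by
        have h8 : ‖z mu - z lam‖ ≤ (‖TA‖ / α) * ‖mu - lam‖ := by
          rw [div_mul_eq_mul_div, le_div_iff₀ hα]
          nlinarith [h6]
        calc ‖SA (z mu - z lam)‖ * ‖mu - lam‖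
            ≤ (‖SA‖ * ‖z mu - z lam‖) * ‖mu - lam‖ :=
              mul_le_mul_of_nonneg_right h5 (norm_nonneg _)
        _ ≤ (‖SA‖ * ((‖TA‖ / α) * ‖mu - lam‖)) * ‖mu - lam‖ := by
              have := mul_le_mul_of_nonneg_left h8 (norm_nonneg SA)
              exact mul_le_mul_of_nonneg_right this (norm_nonneg _)
        _ = (‖SA‖ * ‖TA‖ / α) * ‖mu - lam‖ ^ 2 := by ring
      rw [e1]
      have h12 : -((‖SA‖ * ‖TA‖ / α) * ‖mu - lam‖ ^ 2) ≤ -(‖SA (z mu - z lam)‖ * ‖mu - lam‖) :=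
        neg_le_neg h7
      have h13 : -(‖SA (z mu - z lam)‖ * ‖mu - lam‖)
          ≤ (g lam (z mu) - g lam (z lam)) + ⟪SA (z mu - z lam), mu - lam⟫ := by
        have h14 : (0:ℝ) ≤ g lam (z mu) - g lam (z lam) := sub_nonneg.2 h1
        calc -(‖SA (z mu - z lam)‖ * ‖mu - lam‖) ≤ ⟪SA (z mu - z lam), mu - lam⟫ := h4
        _ = 0 + ⟪SA (z mu - z lam), mu - lam⟫ := (zero_add _).symm
        _ ≤ (g lam (z mu) - g lam (z lam)) + ⟪SA (z mu - z lam), mu - lam⟫ :=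
            add_le_add_left h14 _
      exact le_trans h12 h13
    rw [abs_le]
    constructor
    · exact hlb2
    · have hnn : (0:ℝ) ≤ (‖SA‖ * ‖TA‖ / α) * ‖mu - lam‖ ^ 2 :=
        mul_nonneg hC0 (sq_nonneg _)
      exact le_trans hub hnn
  clear_value g TA SA z
  refine ⟨fun lam => ⟨by rw [hθval lam]; exact EReal.coe_ne_bot _,
    by rw [hθval lam]; exact EReal.coe_ne_top _⟩, ?_, ?_⟩
  · -- differentiability of θ
    refine ⟨fun lam => SA (z lam) - b, fun lam => ?_⟩
    have hGfun : (fun l => (θ l).toReal) = fun l => g l (z l) := funext htoReal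
    rw [hGfun, hasGradientAt_iff_hasFDerivAt, hasFDerivAt_iff_isLittleO_nhds_zero]
    rw [Asymptotics.isLittleO_iff]
    intro c hc
    rw [Metric.eventually_nhds_iff]
    refine ⟨c / (‖SA‖ * ‖TA‖ / α + 1), by positivity, fun {y} hy => ?_⟩
    have hy' : ‖y‖ < c / (‖SA‖ * ‖TA‖ / α + 1) := by
      simpa [dist_eq_norm] using hy
    have hk := hkey lam (lam + y)
    have hsimp : (lam + y) - lam = y := by abel
    rw [hsimp] at hk
    have htd : (InnerProductSpace.toDual ℝ (EuclideanSpace ℝ (Fin q)) (SA (z lam) - b)) y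
        = ⟪SA (z lam) - b, y⟫ := InnerProductSpace.toDual_apply_apply
    rw [Real.norm_eq_abs, htd]
    set C := ‖SA‖ * ‖TA‖ / α with hCdef
    calc |g (lam + y) (z (lam + y)) - g lam (z lam) - ⟪SA (z lam) - b, y⟫|
        ≤ C * ‖y‖ ^ 2 := hk
    _ ≤ c * ‖y‖ := by
        have hyn : (0:ℝ) ≤ ‖y‖ := norm_nonneg _
        have h9 : C * ‖y‖ ≤ c * (C / (C+1)) := by
          have h10 : C * ‖y‖ ≤ C * (c / (C + 1)) :=
            mul_le_mul_of_nonneg_left (le_of_lt hy') hC0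
          calc C * ‖y‖ ≤ C * (c / (C + 1)) := h10
          _ = c * (C / (C+1)) := by ring
        have h11 : C / (C + 1) ≤ 1 := by
          rw [div_le_one (by linarith)]
          linarith
        have h12 : C * ‖y‖ ≤ c := by
          calc C * ‖y‖ ≤ c * (C / (C+1)) := h9
          _ ≤ c * 1 := mul_le_mul_of_nonneg_left h11 (le_of_lt hc)
          _ = c := mul_one c
        nlinarith [h12, hyn]
  · -- strong concavity
    intro l1 l2 t ht0 ht1
    set lm := lambdaMin (A * Aᵀ) (Matrix.isHermitian_mul_conjTranspose_self A) with hlmdef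
    have hlm0 : (0:ℝ) ≤ lm := by
      rw [hlmdef]
      show (0:ℝ) ≤ ⨅ i, (Matrix.isHermitian_mul_conjTranspose_self A).eigenvalues i
      rcases Nat.eq_zero_or_pos q with h0 | h0
      · subst h0
        rw [Real.iInf_of_isEmpty]
      · have : Nonempty (Fin q) := ⟨⟨0, h0⟩⟩
        exact le_ciInf fun i => Matrix.eigenvalues_self_mul_conjTranspose_nonneg A i
    by_cases hll : l1 = l2
    · subst hll
      have hco : t • l1 + (1 - t) • l1 = l1 := by module
      rw [hco, sub_self, norm_zero]
      have hzero : (α * lm / L ^ 2) * (t * (1 - t)) / 2 * (0:ℝ) ^ 2 = 0 := by ring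
      rw [hzero]
      have hid : t * (θ l1).toReal + (1 - t) * (θ l1).toReal = (θ l1).toReal := by ring
      linarith [hid.le]
    · have hq1 : Nonempty (Fin q) := by
        by_contra h
        have hemp : IsEmpty (Fin q) := not_nonempty_iff.1 h
        exact hll (PiLp.ext fun i => (hemp.false i).elim)
      have hn1 : Nonempty (Fin n) := by
        by_contra h
        have hemp : IsEmpty (Fin n) := not_nonempty_iff.1 h
        obtain ⟨i0⟩ := hq1
        exact hA.ne_zero i0 (funext fun j => (hemp.false j).elim)
      have hαL : α ≤ L := by
        obtain ⟨j0⟩ := hn1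
        set u : EuclideanSpace ℝ (Fin n) := EuclideanSpace.single j0 (1:ℝ) with hu
        have hun : ‖u‖ = 1 := by rw [hu]; simp
        have h1 := hmonof u 0
        have h2 : ⟪f' u - f' 0, u - 0⟫ ≤ ‖f' u - f' 0‖ * ‖u - 0‖ := real_inner_le_norm _ _
        have h3 : ‖f' u - f' 0‖ ≤ L * ‖u - 0‖ := hLip 0 u
        rw [sub_zero] at h1 h2 h3
        rw [hun] at h1 h2 h3
        linarith [h1, h2, h3]
      set lt := t • l1 + (1 - t) • l2 with hlt
      set v := TA (l1 - l2) with hvdef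
      -- Rayleigh bound
      have hray : lm * ‖l1 - l2‖ ^ 2 ≤ ‖v‖ ^ 2 := by
        have hrayM := aux_rayleigh_lower (A * Aᵀ)
          (Matrix.isHermitian_mul_conjTranspose_self A) (l1 - l2)
        rw [aux_AAt A (l1 - l2)] at hrayM
        rw [hvdef, hTA]
        exact hrayM
      -- gradient identities
      have hgrad1 : f' (z lt) + TA l1 = (1 - t) • v := by
        rw [hfoc lt]
        have hdiffid : l1 - lt = (1 - t) • (l1 - l2) := by rw [hlt]; module
        calc -TA lt + TA l1 = TA (l1 - lt) := by rw [map_sub]; abel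
        _ = TA ((1 - t) • (l1 - l2)) := by rw [hdiffid]
        _ = (1 - t) • v := by rw [map_smul, hvdef]
      have hgrad2 : f' (z lt) + TA l2 = (-t) • v := by
        rw [hfoc lt]
        have hdiffid : l2 - lt = (-t) • (l1 - l2) := by rw [hlt]; module
        calc -TA lt + TA l2 = TA (l2 - lt) := by rw [map_sub]; abel
        _ = TA ((-t) • (l1 - l2)) := by rw [hdiffid]
        _ = (-t) • v := by rw [map_smul, hvdef]
      -- Lipschitz gradients for the shifted objectives
      have hLip1 : ∀ x y : EuclideanSpace ℝ (Fin n),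
          ‖(f' y + TA l1) - (f' x + TA l1)‖ ≤ L * ‖y - x‖ := by
        intro x y; simpa [add_sub_add_right_eq_sub] using hLip x y
      have hLip2 : ∀ x y : EuclideanSpace ℝ (Fin n),
          ‖(f' y + TA l2) - (f' x + TA l2)‖ ≤ L * ‖y - x‖ := by
        intro x y; simpa [add_sub_add_right_eq_sub] using hLip x y
      set d1 : EuclideanSpace ℝ (Fin n) := (-((1 - t)/L)) • v with hd1
      set d2 : EuclideanSpace ℝ (Fin n) := (t/L) • v with hd2
      have hL0 : L ≠ 0 := ne_of_gt hL
      -- first descent bound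
      have hstep1 : g l1 (z lt + d1) ≤ g l1 (z lt) + ⟪f' (z lt) + TA l1, (z lt + d1) - (z lt)⟫
          + L/2 * ‖(z lt + d1) - (z lt)‖ ^ 2 := aux_descent (hgdiff l1) hLip1 _ _
      rw [add_sub_cancel_left, hgrad1] at hstep1
      have hinner1 : ⟪(1 - t) • v, d1⟫ = (1 - t) * (-((1 - t)/L)) * ‖v‖ ^ 2 := by
        rw [hd1, real_inner_smul_left, real_inner_smul_right, real_inner_self_eq_norm_sq]
        ring
      have hnorm1 : ‖d1‖ ^ 2 = ((1 - t)/L) ^ 2 * ‖v‖ ^ 2 := by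
        rw [hd1, norm_smul, Real.norm_eq_abs, abs_neg,
          abs_of_nonneg (div_nonneg (by linarith) (le_of_lt hL))]
        ring
      have hB1 : (θ l1).toReal ≤ g l1 (z lt) - (1 - t) ^ 2 / (2*L) * ‖v‖ ^ 2 := by
        have harith : (1 - t) * (-((1 - t)/L)) * ‖v‖ ^ 2 + L/2 * (((1 - t)/L) ^ 2 * ‖v‖ ^ 2)
            = -((1 - t) ^ 2 / (2*L) * ‖v‖ ^ 2) := by
          field_simp
          ring
        rw [htoReal l1]
        calc g l1 (z l1) ≤ g l1 (z lt + d1) := hz l1 _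
        _ ≤ g l1 (z lt) + ⟪(1 - t) • v, d1⟫ + L/2 * ‖d1‖ ^ 2 := hstep1
        _ = g l1 (z lt) - (1 - t) ^ 2 / (2*L) * ‖v‖ ^ 2 := by
            rw [hinner1, hnorm1]
            linear_combination harith
      -- second descent bound
      have hstep2 : g l2 (z lt + d2) ≤ g l2 (z lt) + ⟪f' (z lt) + TA l2, (z lt + d2) - (z lt)⟫
          + L/2 * ‖(z lt + d2) - (z lt)‖ ^ 2 := aux_descent (hgdiff l2) hLip2 _ _
      rw [add_sub_cancel_left, hgrad2] at hstep2
      have hinner2 : ⟪(-t) • v, d2⟫ = (-t) * (t/L) * ‖v‖ ^ 2 := by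
        rw [hd2, real_inner_smul_left, real_inner_smul_right, real_inner_self_eq_norm_sq]
        ring
      have hnorm2 : ‖d2‖ ^ 2 = (t/L) ^ 2 * ‖v‖ ^ 2 := by
        rw [hd2, norm_smul, Real.norm_eq_abs, abs_of_nonneg (div_nonneg ht0 (le_of_lt hL))]
        ring
      have hB2 : (θ l2).toReal ≤ g l2 (z lt) - t ^ 2 / (2*L) * ‖v‖ ^ 2 := by
        have harith : (-t) * (t/L) * ‖v‖ ^ 2 + L/2 * ((t/L) ^ 2 * ‖v‖ ^ 2)
            = -(t ^ 2 / (2*L) * ‖v‖ ^ 2) := by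
          field_simp
          ring
        rw [htoReal l2]
        calc g l2 (z l2) ≤ g l2 (z lt + d2) := hz l2 _
        _ ≤ g l2 (z lt) + ⟪(-t) • v, d2⟫ + L/2 * ‖d2‖ ^ 2 := hstep2
        _ = g l2 (z lt) - t ^ 2 / (2*L) * ‖v‖ ^ 2 := by
            rw [hinner2, hnorm2]
            linear_combination harith
      -- affine identity in the multiplier
      have haff : t * g l1 (z lt) + (1 - t) * g l2 (z lt) = g lt (z lt) := by
        rw [hg_eq l1, hg_eq l2, hg_eq lt]
        have hTAc : TA lt = t • TA l1 + (1 - t) • TA l2 := by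
          rw [hlt, map_add, map_smul, map_smul]
        have hin : ⟪TA lt, z lt⟫ = t * ⟪TA l1, z lt⟫ + (1 - t) * ⟪TA l2, z lt⟫ := by
          rw [hTAc, inner_add_left, real_inner_smul_left, real_inner_smul_left]
        have hsum : ∑ i, lt i * b i
            = t * (∑ i, l1 i * b i) + (1 - t) * (∑ i, l2 i * b i) := by
          rw [Finset.mul_sum, Finset.mul_sum, ← Finset.sum_add_distrib]
          refine Finset.sum_congr rfl fun i _ => ?_
          have hlti : lt i = t * l1 i + (1 - t) * l2 i := by rw [hlt]; rfl
          rw [hlti]; ring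
        rw [hin, hsum]; ring
      -- combine
      have hsum2 : t * (θ l1).toReal + (1 - t) * (θ l2).toReal
          ≤ (θ lt).toReal - t * (1 - t) / (2*L) * ‖v‖ ^ 2 := by
        have c1 := mul_le_mul_of_nonneg_left hB1 ht0
        have c2 := mul_le_mul_of_nonneg_left hB2 (by linarith : (0:ℝ) ≤ 1 - t)
        calc t * (θ l1).toReal + (1 - t) * (θ l2).toReal
            ≤ t * (g l1 (z lt) - (1 - t) ^ 2 / (2*L) * ‖v‖ ^ 2)
              + (1 - t) * (g l2 (z lt) - t ^ 2 / (2*L) * ‖v‖ ^ 2) := add_le_add c1 c2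
        _ = (t * g l1 (z lt) + (1 - t) * g l2 (z lt)) - t * (1 - t) / (2*L) * ‖v‖ ^ 2 := by
            ring
        _ = g lt (z lt) - t * (1 - t) / (2*L) * ‖v‖ ^ 2 := by rw [haff]
        _ = (θ lt).toReal - t * (1 - t) / (2*L) * ‖v‖ ^ 2 := by rw [htoReal lt]
      have hconst : (α * lm / L ^ 2) * (t * (1 - t)) / 2 * ‖l1 - l2‖ ^ 2
          ≤ t * (1 - t) / (2*L) * ‖v‖ ^ 2 := by
        have h1 : α * (lm * ‖l1 - l2‖ ^ 2) ≤ L * ‖v‖ ^ 2 := by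
          calc α * (lm * ‖l1 - l2‖ ^ 2) ≤ L * (lm * ‖l1 - l2‖ ^ 2) :=
              mul_le_mul_of_nonneg_right hαL (by positivity)
          _ ≤ L * ‖v‖ ^ 2 := mul_le_mul_of_nonneg_left hray (le_of_lt hL)
        have h2 := mul_le_mul_of_nonneg_left h1
          (div_nonneg (mul_nonneg ht0 (by linarith : (0:ℝ) ≤ 1 - t))
            (by positivity : (0:ℝ) ≤ 2 * L ^ 2))
        calc (α * lm / L ^ 2) * (t * (1 - t)) / 2 * ‖l1 - l2‖ ^ 2
            = (t * (1 - t) / (2 * L ^ 2)) * (α * (lm * ‖l1 - l2‖ ^ 2)) := by ring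
        _ ≤ (t * (1 - t) / (2 * L ^ 2)) * (L * ‖v‖ ^ 2) := h2
        _ = t * (1 - t) / (2*L) * ‖v‖ ^ 2 := by
            field_simp
      linarith [hsum2, hconst]
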